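/- arXiv:2003.12034 — 8 statements merged into one kernel-verified Lean document; each statement's English description precedes it below -/
import Mathlib

section
/- Fix σ > 0, σ_J > 0 and p > 0, and define R(p, γ) = log₂(1 + p·σ²/(2·(1 + γ·σ_J²) + (1 + γ·σ_J²)²/(p·σ²))) for γ ≥ 0. Then the function γ ↦ R(p, γ) is convex on [0, ∞). -/
open Real Set

private lemma skg_h_hasDerivAt {a u : ℝ} (ha : 0 < a) (hu : 0 < u) :
    HasDerivAt (fun u : ℝ => 2 * Real.log (u + a) - Real.log u - Real.log (u + 2 * a))
      (2 / (u + a) - 1 / u - 1 / (u + 2 * a)) u := by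
  have h1 : 0 < u + a := by linarith
  have h2 : 0 < u + 2 * a := by linarith
  have d1 : HasDerivAt (fun u : ℝ => Real.log (u + a)) (1 / (u + a)) u := by
    simpa using (((hasDerivAt_id u).add_const a).log h1.ne')
  have d2 : HasDerivAt Real.log (1 / u) u := by
    simpa [one_div] using Real.hasDerivAt_log hu.ne'
  have d3 : HasDerivAt (fun u : ℝ => Real.log (u + 2 * a)) (1 / (u + 2 * a)) u := by
    simpa using (((hasDerivAt_id u).add_const (2 * a)).log h2.ne')
  have := ((d1.const_mul 2).sub d2).sub d3
  refine this.congr_deriv ?_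
  ring

private lemma skg_h'_hasDerivAt {a u : ℝ} (ha : 0 < a) (hu : 0 < u) :
    HasDerivAt (fun u : ℝ => 2 / (u + a) - 1 / u - 1 / (u + 2 * a))
      (-(2 / (u + a) ^ 2) + 1 / u ^ 2 + 1 / (u + 2 * a) ^ 2) u := by
  have h1 : 0 < u + a := by linarith
  have h2 : 0 < u + 2 * a := by linarith
  have d1 : HasDerivAt (fun u : ℝ => (u + a)⁻¹) (-1 / (u + a) ^ 2) u := by
    simpa [Pi.inv_def] using (((hasDerivAt_id u).add_const a).inv h1.ne')
  have d2 : HasDerivAt (fun u : ℝ => u⁻¹) (-1 / u ^ 2) u := by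
    simpa [Pi.inv_def] using ((hasDerivAt_id u).inv hu.ne')
  have d3 : HasDerivAt (fun u : ℝ => (u + 2 * a)⁻¹) (-1 / (u + 2 * a) ^ 2) u := by
    simpa [Pi.inv_def] using (((hasDerivAt_id u).add_const (2 * a)).inv h2.ne')
  have key := ((d1.const_mul 2).sub d2).sub d3
  have keyfun : (fun x : ℝ => 2 * (x + a)⁻¹ - x⁻¹ - (x + 2 * a)⁻¹)
      = (fun x : ℝ => 2 / (x + a) - 1 / x - 1 / (x + 2 * a)) := by
    funext x
    rw [div_eq_mul_inv, one_div, one_div]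
  rw [Pi.sub_def, Pi.sub_def, keyfun] at key
  refine key.congr_deriv ?_
  ring

private lemma skg_h''_nonneg {a u : ℝ} (ha : 0 < a) (hu : 0 < u) :
    0 ≤ -(2 / (u + a) ^ 2) + 1 / u ^ 2 + 1 / (u + 2 * a) ^ 2 := by
  have h1 : 0 < u + a := by linarith
  have h2 : 0 < u + 2 * a := by linarith
  have key : 2 / (u + a) ^ 2 ≤ 1 / u ^ 2 + 1 / (u + 2 * a) ^ 2 := by
    rw [div_add_div _ _ (by positivity) (by positivity), div_le_div_iff₀ (by positivity) (by positivity)]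
    nlinarith [mul_pos hu h2, mul_pos ha ha, mul_pos (mul_pos ha ha) (mul_pos hu h2), sq_nonneg (a*a)]
  linarith

private lemma skg_h_convexOn {a : ℝ} (ha : 0 < a) :
    ConvexOn ℝ (Set.Ici (1 : ℝ))
      (fun u : ℝ => 2 * Real.log (u + a) - Real.log u - Real.log (u + 2 * a)) := by
  set f : ℝ → ℝ := fun u => 2 * Real.log (u + a) - Real.log u - Real.log (u + 2 * a) with hf
  set f' : ℝ → ℝ := fun u => 2 / (u + a) - 1 / u - 1 / (u + 2 * a) with hf'
  have deriv_eq : ∀ u : ℝ, 0 < u → deriv f u = f' u := fun u hu =>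
    (skg_h_hasDerivAt ha hu).deriv
  apply convexOn_of_deriv2_nonneg (convex_Ici 1)
  · intro x hx
    have hx0 : 0 < x := lt_of_lt_of_le one_pos hx
    exact ((skg_h_hasDerivAt ha hx0).continuousAt).continuousWithinAt
  · intro x hx
    rw [interior_Ici] at hx
    exact (skg_h_hasDerivAt ha (lt_trans one_pos hx)).differentiableAt.differentiableWithinAt
  · intro x hx
    rw [interior_Ici] at hx
    have hx0 : 0 < x := lt_trans one_pos hx
    have hevt : deriv f =ᶠ[nhds x] f' :=
      Filter.eventuallyEq_of_mem (Ioi_mem_nhds hx0) (fun y hy => deriv_eq y hy)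
    exact ((Filter.EventuallyEq.differentiableAt_iff hevt).mpr (skg_h'_hasDerivAt ha hx0).differentiableAt).differentiableWithinAt
  · intro x hx
    rw [interior_Ici] at hx
    have hx0 : 0 < x := lt_trans one_pos hx
    have hevt : deriv f =ᶠ[nhds x] f' :=
      Filter.eventuallyEq_of_mem (Ioi_mem_nhds hx0) (fun y hy => deriv_eq y hy)
    have : deriv (deriv f) x = deriv f' x := hevt.deriv_eq
    simp only [Function.iterate_succ, Function.iterate_zero, Function.comp_apply, id]
    rw [this, (skg_h'_hasDerivAt ha hx0).deriv]
    exact skg_h''_nonneg ha hx0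

private lemma skg_convexOn_congr {s : Set ℝ} {f g : ℝ → ℝ} (hg : ConvexOn ℝ s g)
    (hfg : ∀ x ∈ s, f x = g x) : ConvexOn ℝ s f := by
  refine ⟨hg.1, fun x hx y hy c d hc hd hcd => ?_⟩
  rw [hfg _ hx, hfg _ hy, hfg _ (hg.1 hx hy hc hd hcd)]
  exact hg.2 hx hy hc hd hcd

private lemma skg_comp_affine {b : ℝ} (hb : 0 ≤ b) {f : ℝ → ℝ}
    (hf : ConvexOn ℝ (Set.Ici (1 : ℝ)) f) :
    ConvexOn ℝ (Set.Ici (0 : ℝ)) (fun γ : ℝ => f (1 + γ * b)) := by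
  refine ⟨convex_Ici 0, fun x hx y hy c d hc hd hcd => ?_⟩
  have hx1 : (1 : ℝ) + x * b ∈ Set.Ici (1 : ℝ) := by
    have : 0 ≤ x * b := mul_nonneg hx hb
    simpa using this
  have hy1 : (1 : ℝ) + y * b ∈ Set.Ici (1 : ℝ) := by
    have : 0 ≤ y * b := mul_nonneg hy hb
    simpa using this
  have key : (1 : ℝ) + (c * x + d * y) * b = c * (1 + x * b) + d * (1 + y * b) := by
    linear_combination (-1 : ℝ) * hcd
  simp only [smul_eq_mul]
  rw [key]
  exact hf.2 hx1 hy1 hc hd hcd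

/-- The per-subcarrier W-SKG rate `R(p, γ)` of equation (17) is convex in the jamming
power `γ` on `[0, ∞)`, for fixed pilot power `p > 0` (key ingredient of Lemma 2). -/
theorem skg_rate_convexOn_in_jamming_power
    (σ σJ p : ℝ) (hσ : 0 < σ) (hσJ : 0 < σJ) (hp : 0 < p) :
    ConvexOn ℝ (Set.Ici 0)
      (fun γ : ℝ => Real.logb 2
        (1 + p * σ ^ 2 / (2 * (1 + γ * σJ ^ 2) + (1 + γ * σJ ^ 2) ^ 2 / (p * σ ^ 2)))) := by
  set a : ℝ := p * σ ^ 2 with ha_def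
  set b : ℝ := σJ ^ 2 with hb_def
  have ha : 0 < a := by positivity
  have hb : 0 < b := by positivity
  have hconv : ConvexOn ℝ (Set.Ici (0 : ℝ))
      (fun γ : ℝ => (Real.log 2)⁻¹ *
        (2 * Real.log ((1 + γ * b) + a) - Real.log (1 + γ * b) -
          Real.log ((1 + γ * b) + 2 * a))) := by
    have := (skg_comp_affine hb.le (skg_h_convexOn ha)).smul
      (c := (Real.log 2)⁻¹) (by positivity)
    simpa [smul_eq_mul] using this
  refine skg_convexOn_congr hconv (fun γ hγ => ?_)
  have hγ0 : (0 : ℝ) ≤ γ := hγ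
  set u : ℝ := 1 + γ * b with hu_def
  have hu : 0 < u := by have : 0 ≤ γ * b := mul_nonneg hγ0 hb.le; simp [hu_def]; linarith
  have h1 : 0 < u + a := by linarith
  have h2 : 0 < u + 2 * a := by linarith
  have hden : 0 < 2 * u + u ^ 2 / a := by positivity
  have hid : 1 + a / (2 * u + u ^ 2 / a) = (u + a) ^ 2 / (u * (u + 2 * a)) := by
    field_simp
    ring
  have : Real.logb 2 (1 + a / (2 * u + u ^ 2 / a)) =
      (Real.log 2)⁻¹ * (2 * Real.log (u + a) - Real.log u - Real.log (u + 2 * a)) := by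
    rw [hid, Real.logb, Real.log_div (by positivity) (by positivity),
      Real.log_mul hu.ne' h2.ne', Real.log_pow]
    push_cast
    ring
  exact this
end

section
/- Fix σ > 0, σ_J > 0, p > 0, Γ > 0 and a positive integer N, and define R(p, γ) = log₂(1 + p·σ²/(2·(1 + γ·σ_J²) + (1 + γ·σ_J²)²/(p·σ²))) for γ ≥ 0. Then for every vector (γ₁, …, γ_N) with γᵢ ≥ 0 for all i and ∑_{i=1}^N γᵢ ≤ N·Γ, one has N·R(p, Γ) ≤ ∑_{i=1}^N R(p, γᵢ). Consequently the uniform allocation γᵢ = Γ for all i minimizes the secret-key sum rate ∑_{i=1}^N R(p, γᵢ) over the jammer's feasible set. -/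
open Real Set

private lemma skg_hasDerivAt (a c : ℝ) (x : ℝ) (hu : 0 < 1 + x * c) (ha : 0 < a) :
    HasDerivAt (fun x : ℝ => 2 * Real.log (1 + x * c + a) - Real.log (1 + x * c)
        - Real.log (1 + x * c + 2 * a))
      (2 * (c / (1 + x * c + a)) - c / (1 + x * c) - c / (1 + x * c + 2 * a)) x := by
  have hlin : HasDerivAt (fun x : ℝ => 1 + x * c) c x := by
    simpa using ((hasDerivAt_id x).mul_const c).const_add 1
  have h1 : HasDerivAt (fun x : ℝ => Real.log (1 + x * c + a)) (c / (1 + x * c + a)) x := by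
    have := (Real.hasDerivAt_log (by linarith : (1 + x * c + a) ≠ 0)).comp x
      (hlin.add_const a)
    simpa [div_eq_inv_mul, Function.comp_def] using this
  have h2 : HasDerivAt (fun x : ℝ => Real.log (1 + x * c)) (c / (1 + x * c)) x := by
    have := (Real.hasDerivAt_log (by linarith : (1 + x * c) ≠ 0)).comp x hlin
    simpa [div_eq_inv_mul, Function.comp_def] using this
  have h3 : HasDerivAt (fun x : ℝ => Real.log (1 + x * c + 2 * a)) (c / (1 + x * c + 2 * a)) x := by
    have := (Real.hasDerivAt_log (by linarith : (1 + x * c + 2 * a) ≠ 0)).comp x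
      (hlin.add_const (2 * a))
    simpa [div_eq_inv_mul, Function.comp_def] using this
  exact ((h1.const_mul 2).sub h2).sub h3

private lemma skg_hasDerivAt2 (a c : ℝ) (x : ℝ) (hu : 0 < 1 + x * c) (ha : 0 < a) :
    HasDerivAt (fun x : ℝ => 2 * (c / (1 + x * c + a)) - c / (1 + x * c) - c / (1 + x * c + 2 * a))
      (2 * (-(c * c) / (1 + x * c + a) ^ 2) - -(c * c) / (1 + x * c) ^ 2
        - -(c * c) / (1 + x * c + 2 * a) ^ 2) x := by
  have hlin : HasDerivAt (fun x : ℝ => 1 + x * c) c x := by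
    simpa using ((hasDerivAt_id x).mul_const c).const_add 1
  have h1 : HasDerivAt (fun x : ℝ => c / (1 + x * c + a)) (-(c * c) / (1 + x * c + a) ^ 2) x := by
    have := (hasDerivAt_const x c).div (hlin.add_const a) (by linarith)
    convert this using 1
    exacts [rfl, rfl, rfl, by ring]
  have h2 : HasDerivAt (fun x : ℝ => c / (1 + x * c)) (-(c * c) / (1 + x * c) ^ 2) x := by
    have := (hasDerivAt_const x c).div hlin (by linarith)
    convert this using 1
    exacts [rfl, rfl, rfl, by ring]
  have h3 : HasDerivAt (fun x : ℝ => c / (1 + x * c + 2 * a))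
      (-(c * c) / (1 + x * c + 2 * a) ^ 2) x := by
    have := (hasDerivAt_const x c).div (hlin.add_const (2 * a)) (by linarith)
    convert this using 1
    exacts [rfl, rfl, rfl, by ring]
  exact ((h1.const_mul 2).sub h2).sub h3

/-- Lemma 2 of the paper: for any feasible jamming power allocation `γ : Fin N → ℝ`
(nonnegative entries summing to at most `N·Γ`), the uniform allocation `(Γ, …, Γ)`
minimizes the secret-key sum rate, i.e. `N·R(p, Γ) ≤ ∑ᵢ R(p, γᵢ)`. -/
theorem uniform_jamming_minimizes_skg_sum_rate
    (σ σJ p Γ : ℝ) (hσ : 0 < σ) (hσJ : 0 < σJ) (hp : 0 < p) (hΓ : 0 < Γ)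
    (N : ℕ) (hN : 0 < N)
    (R : ℝ → ℝ → ℝ)
    (hR : ∀ q γ, R q γ = Real.logb 2
      (1 + q * σ ^ 2 / (2 * (1 + γ * σJ ^ 2) + (1 + γ * σJ ^ 2) ^ 2 / (q * σ ^ 2))))
    (γ : Fin N → ℝ) (hγ : ∀ i, 0 ≤ γ i) (hsum : ∑ i, γ i ≤ N * Γ) :
    (N : ℝ) * R p Γ ≤ ∑ i, R p (γ i) := by
  set a : ℝ := p * σ ^ 2 with ha_def
  have ha : 0 < a := by positivity
  set c : ℝ := σJ ^ 2 with hc_def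
  have hc : 0 < c := by positivity
  set h : ℝ → ℝ := fun x => 2 * Real.log (1 + x * c + a) - Real.log (1 + x * c)
      - Real.log (1 + x * c + 2 * a) with hh_def
  -- identity: for x ≥ 0, R p x = h x / log 2
  have hlog2 : (0:ℝ) < Real.log 2 := Real.log_pos (by norm_num)
  have key : ∀ x : ℝ, 0 ≤ x → R p x = h x / Real.log 2 := by
    intro x hx
    have hu : 0 < 1 + x * c := by nlinarith
    have harg : 1 + p * σ ^ 2 / (2 * (1 + x * σJ ^ 2) + (1 + x * σJ ^ 2) ^ 2 / (p * σ ^ 2))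
        = (1 + x * c + a) ^ 2 / ((1 + x * c) * (1 + x * c + 2 * a)) := by
      rw [ha_def, hc_def] at *
      have h1 : (0:ℝ) < 1 + x * σJ ^ 2 := by nlinarith
      have h2 : (0:ℝ) < p * σ ^ 2 := by positivity
      field_simp
      ring
    rw [hR, harg, Real.logb, hh_def]
    congr 1
    rw [Real.log_div (by positivity) (by positivity), Real.log_mul (by positivity) (by positivity),
      Real.log_pow]
    push_cast
    ring
  -- convexity of h on Ici 0
  have hint : interior (Ici (0:ℝ)) = Ioi 0 := interior_Ici
  have hupos : ∀ x : ℝ, 0 ≤ x → 0 < 1 + x * c := by intro x hx; nlinarith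
  have hcont : ContinuousOn h (Ici 0) := by
    intro x hx
    exact (skg_hasDerivAt a c x (hupos x hx) ha).continuousAt.continuousWithinAt
  have hconv : ConvexOn ℝ (Ici 0) h := by
    apply convexOn_of_hasDerivWithinAt2_nonneg (f' := fun x =>
        2 * (c / (1 + x * c + a)) - c / (1 + x * c) - c / (1 + x * c + 2 * a))
      (f'' := fun x => 2 * (-(c * c) / (1 + x * c + a) ^ 2) - -(c * c) / (1 + x * c) ^ 2
        - -(c * c) / (1 + x * c + 2 * a) ^ 2) (convex_Ici 0) hcont
    · intro x hx
      rw [hint] at hx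
      exact (skg_hasDerivAt a c x (hupos x hx.le) ha).hasDerivWithinAt
    · intro x hx
      rw [hint] at hx
      exact (skg_hasDerivAt2 a c x (hupos x hx.le) ha).hasDerivWithinAt
    · intro x hx
      rw [hint] at hx
      have hu : 0 < 1 + x * c := hupos x hx.le
      set u : ℝ := 1 + x * c
      have h1 : 0 < u + a := by linarith
      have h2 : 0 < u + 2 * a := by linarith
      have e : 2 * (-(c * c) / (u + a) ^ 2) - -(c * c) / u ^ 2 - -(c * c) / (u + 2 * a) ^ 2
          = c * c * ((6 * (u + a) ^ 2 * a ^ 2 - 2 * a ^ 4)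
            / (u ^ 2 * (u + 2 * a) ^ 2 * (u + a) ^ 2)) := by
        field_simp
        ring
      rw [e]
      have hnum : 0 ≤ 6 * (u + a) ^ 2 * a ^ 2 - 2 * a ^ 4 := by nlinarith [sq_nonneg u, mul_pos hu ha]
      positivity
  -- h is antitone on Ici 0
  have hanti : AntitoneOn h (Ici 0) := by
    apply antitoneOn_of_deriv_nonpos (convex_Ici 0) hcont
    · intro x hx
      rw [hint] at hx
      exact (skg_hasDerivAt a c x (hupos x hx.le) ha).differentiableAt.differentiableWithinAt
    · intro x hx
      rw [hint] at hx
      have hu : 0 < 1 + x * c := hupos x hx.le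
      rw [(skg_hasDerivAt a c x hu ha).deriv]
      set u : ℝ := 1 + x * c
      have h1 : 0 < u + a := by linarith
      have h2 : 0 < u + 2 * a := by linarith
      have e : 2 * (c / (u + a)) - c / u - c / (u + 2 * a)
          = -(2 * c * a ^ 2 / (u * (u + 2 * a) * (u + a))) := by
        field_simp
        ring
      rw [e, neg_nonpos]
      positivity
  -- Jensen
  have hNpos : (0:ℝ) < N := Nat.cast_pos.mpr hN
  set m : ℝ := (∑ i, γ i) / N with hm_def
  have hm0 : 0 ≤ m := by
    apply div_nonneg _ hNpos.le
    exact Finset.sum_nonneg fun i _ => hγ i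
  have hmΓ : m ≤ Γ := by
    rw [hm_def, div_le_iff₀ hNpos]
    linarith
  have hjensen : h m ≤ ∑ i, ((N:ℝ)⁻¹) • h (γ i) := by
    have := hconv.map_sum_le (t := Finset.univ) (w := fun _ : Fin N => (N:ℝ)⁻¹)
      (p := fun i => γ i) (fun i _ => by positivity)
      (by simp [Finset.sum_const, Finset.card_univ]; field_simp)
      (fun i _ => hγ i)
    have hms : ∑ i, ((N:ℝ)⁻¹) • γ i = m := by
      rw [hm_def]
      simp [smul_eq_mul, ← Finset.mul_sum, div_eq_inv_mul]
    rwa [hms] at this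
  have hΓm : h Γ ≤ h m := hanti hm0 (le_of_lt hΓ |>.trans (le_refl Γ) |> fun _ => hΓ.le) hmΓ
  -- assemble
  have hfinal : (N:ℝ) * h Γ ≤ ∑ i, h (γ i) := by
    have : (N:ℝ) * h m ≤ ∑ i, h (γ i) := by
      have := mul_le_mul_of_nonneg_left hjensen hNpos.le
      calc (N:ℝ) * h m ≤ (N:ℝ) * ∑ i, ((N:ℝ)⁻¹) • h (γ i) := this
        _ = ∑ i, h (γ i) := by
            rw [Finset.mul_sum]
            congr 1
            ext i
            rw [smul_eq_mul, ← mul_assoc, mul_inv_cancel₀ hNpos.ne', one_mul]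
    calc (N:ℝ) * h Γ ≤ (N:ℝ) * h m := by nlinarith [hΓm]
      _ ≤ ∑ i, h (γ i) := this
  rw [key Γ hΓ.le]
  have hRγ : ∑ i, R p (γ i) = (∑ i, h (γ i)) / Real.log 2 := by
    rw [Finset.sum_div]
    exact Finset.sum_congr rfl fun i _ => key (γ i) (hγ i)
  rw [hRγ, ← mul_div_assoc]
  gcongr
end

section
/- Fix σ > 0, σ_J > 0, p > 0, Γ > 0 and a positive integer N, and define R(p, γ) = log₂(1 + p·σ²/(2·(1 + γ·σ_J²) + (1 + γ·σ_J²)²/(p·σ²))) for γ ≥ 0. Then the infimum of ∑_{i=1}^N R(p, γᵢ) over all (γ₁, …, γ_N) with γᵢ ≥ 0 and ∑_{i=1}^N γᵢ ≤ N·Γ equals N·R(p, Γ), and this infimum is attained at the uniform point (Γ, …, Γ). -/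
/-- The attained-minimum formulation of Lemma 2 and of the jammer's best response (19):
the infimum of the secret-key sum rate `∑ᵢ R(p, γᵢ)` over feasible jamming allocations
(nonnegative, summing to at most `N·Γ`) equals `N·R(p, Γ)`, attained at the uniform
point `(Γ, …, Γ)`. -/
theorem uniform_jamming_isLeast_skg_sum_rate
    (σ σJ p Γ : ℝ) (hσ : 0 < σ) (hσJ : 0 < σJ) (hp : 0 < p) (hΓ : 0 < Γ)
    (N : ℕ) (hN : 0 < N)
    (R : ℝ → ℝ → ℝ)
    (hR : ∀ q γ, R q γ = Real.logb 2
      (1 + q * σ ^ 2 / (2 * (1 + γ * σJ ^ 2) + (1 + γ * σJ ^ 2) ^ 2 / (q * σ ^ 2)))) :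
    IsLeast {x : ℝ | ∃ γ : Fin N → ℝ,
        (∀ i, 0 ≤ γ i) ∧ (∑ i, γ i ≤ N * Γ) ∧ x = ∑ i, R p (γ i)}
      ((N : ℝ) * R p Γ) ∧
    ((N : ℝ) * R p Γ = ∑ _i : Fin N, R p Γ) := by
  set a : ℝ := p * σ ^ 2 with ha_def
  set b : ℝ := σJ ^ 2 with hb_def
  have ha : 0 < a := by positivity
  have hb : 0 < b := by positivity
  have hlog2 : 0 < Real.log 2 := Real.log_pos (by norm_num)
  -- rewrite R in simplified form
  have hrw : ∀ γ : ℝ, 0 ≤ γ →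
      R p γ = Real.logb 2 (((1 + γ * b) + a) ^ 2 / ((1 + γ * b) * ((1 + γ * b) + 2 * a))) := by
    intro γ hγ
    have hu : (0 : ℝ) < 1 + γ * b := by nlinarith
    rw [hR]
    congr 1
    have h1 : (2 * (1 + γ * b) + (1 + γ * b) ^ 2 / a) > 0 := by positivity
    field_simp
    ring
  set v : ℝ := 1 + Γ * b with hv_def
  have hv : 0 < v := by nlinarith
  set c : ℝ := -(2 * a ^ 2) / (v * (v + a) * (v + 2 * a)) with hc_def
  have hc : c ≤ 0 := by
    apply div_nonpos_of_nonpos_of_nonneg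
    · nlinarith
    · positivity
  set C : ℝ := c * b / Real.log 2 with hC_def
  have hC : C ≤ 0 := by
    apply div_nonpos_of_nonpos_of_nonneg _ hlog2.le
    exact mul_nonpos_of_nonpos_of_nonneg hc hb.le
  have hB : 0 < (v + a) ^ 2 / (v * (v + 2 * a)) := by positivity
  -- key tangent-line inequality
  have key : ∀ γ : ℝ, 0 ≤ γ → R p Γ + C * (γ - Γ) ≤ R p γ := by
    intro γ hγ
    have hu : (0 : ℝ) < 1 + γ * b := by nlinarith
    set u : ℝ := 1 + γ * b with hu_def
    rw [hrw γ hγ, hrw Γ hΓ.le]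
    set A : ℝ := (u + a) ^ 2 / (u * (u + 2 * a)) with hA_def
    set B : ℝ := (v + a) ^ 2 / (v * (v + 2 * a)) with hB_def
    have hA : 0 < A := by positivity
    have huv : u - v = b * (γ - Γ) := by rw [hu_def, hv_def]; ring
    -- log lower bound
    have h1 : Real.log (B / A) ≤ B / A - 1 :=
      Real.log_le_sub_one_of_pos (by positivity)
    have h2 : Real.log (B / A) = Real.log B - Real.log A :=
      Real.log_div hB.ne' hA.ne'
    -- polynomial certificate
    have hkey : 1 - B / A - c * (u - v) =
        (a ^ 2 * (u - v) ^ 2 * (3 * a + 2 * u + v)) /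
          (v * (v + 2 * a) * ((u + a) ^ 2) * (v + a)) := by
      rw [hA_def, hB_def, hc_def]
      field_simp
      ring
    have hpos : 0 ≤ (a ^ 2 * (u - v) ^ 2 * (3 * a + 2 * u + v)) /
          (v * (v + 2 * a) * ((u + a) ^ 2) * (v + a)) := by
      have h3 : 0 < 3 * a + 2 * u + v := by positivity
      positivity
    have h4 : c * (u - v) ≤ 1 - B / A := by linarith
    have h5 : Real.log B + c * b * (γ - Γ) ≤ Real.log A := by
      have : c * b * (γ - Γ) = c * (u - v) := by rw [huv]; ring
      linarith
    have hEq : Real.logb 2 B + C * (γ - Γ) =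
        (Real.log B + c * b * (γ - Γ)) / Real.log 2 := by
      rw [Real.logb, hC_def]; field_simp
    rw [hEq, Real.logb]
    exact div_le_div_of_nonneg_right h5 hlog2.le
  constructor
  · constructor
    · -- membership: uniform point
      refine ⟨fun _ => Γ, fun _ => hΓ.le, ?_, ?_⟩
      · simp [Finset.sum_const, Finset.card_univ, nsmul_eq_mul]
      · simp [Finset.sum_const, Finset.card_univ, nsmul_eq_mul]
    · -- lower bound
      rintro x ⟨γ, hnn, hsum, rfl⟩
      have hs : ∑ i, (R p Γ + C * (γ i - Γ)) ≤ ∑ i, R p (γ i) :=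
        Finset.sum_le_sum fun i _ => key (γ i) (hnn i)
      have hsplit : ∑ i : Fin N, (R p Γ + C * (γ i - Γ)) =
          (N : ℝ) * R p Γ + C * ((∑ i, γ i) - N * Γ) := by
        rw [Finset.sum_add_distrib, Finset.sum_const, Finset.card_univ,
          Fintype.card_fin, nsmul_eq_mul, ← Finset.mul_sum]
        rw [Finset.sum_sub_distrib, Finset.sum_const, Finset.card_univ,
          Fintype.card_fin, nsmul_eq_mul]
      have hfin : 0 ≤ C * ((∑ i, γ i) - N * Γ) := by
        nlinarith [mul_nonneg (neg_nonneg.2 hC) (sub_nonneg.2 hsum)]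
      rw [hsplit] at hs
      linarith
  · simp [Finset.sum_const, Finset.card_univ, mul_comm]
end

section
/- Fix σ > 0, σ_J > 0, Γ > 0, p_th > 0 and P > 0, and define R(p, γ) = log₂(1 + p·σ²/(2·(1 + γ·σ_J²) + (1 + γ·σ_J²)²/(p·σ²))) for p > 0, γ ≥ 0. Then R(P, Γ) > R(p_th, 0) if and only if P > p_th·(σ_J²·Γ + 1), and R(P, Γ) < R(p_th, 0) if and only if P < p_th·(σ_J²·Γ + 1). -/
lemma skg_f_lt_iff (u v : ℝ) (hu : 0 < u) (hv : 0 < v) :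
    u ^ 2 / (2 * u + 1) < v ^ 2 / (2 * v + 1) ↔ u < v := by
  rw [div_lt_div_iff₀ (by linarith) (by linarith)]
  constructor
  · intro h; nlinarith [mul_pos hu hv, sq_nonneg (u - v), sq_nonneg (u + v)]
  · intro h; nlinarith [mul_pos hu hv, sq_nonneg (u - v), sq_nonneg (u + v)]

lemma skg_rewrite (σ p γ σJ : ℝ) (hσ : 0 < σ) (hp : 0 < p) (hγ : 0 ≤ γ) (hσJ : 0 < σJ) :
    p * σ ^ 2 / (2 * (1 + γ * σJ ^ 2) + (1 + γ * σJ ^ 2) ^ 2 / (p * σ ^ 2))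
      = (p * σ ^ 2 / (1 + γ * σJ ^ 2)) ^ 2 / (2 * (p * σ ^ 2 / (1 + γ * σJ ^ 2)) + 1) := by
  have ha : (0:ℝ) < 1 + γ * σJ ^ 2 := by positivity
  have hps : (0:ℝ) < p * σ ^ 2 := by positivity
  rw [div_eq_div_iff (by positivity) (by positivity)]
  field_simp

/-- The comparison criterion in the proof of Theorem 1: `R(P, Γ) > R(p_th, 0)` iff
`P > p_th·(σ_J²·Γ + 1)`, and `R(P, Γ) < R(p_th, 0)` iff `P < p_th·(σ_J²·Γ + 1)`. -/
theorem skg_rate_comparison_criterion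
    (σ σJ Γ pth P : ℝ) (hσ : 0 < σ) (hσJ : 0 < σJ) (hΓ : 0 < Γ) (hpth : 0 < pth)
    (hP : 0 < P)
    (R : ℝ → ℝ → ℝ)
    (hR : ∀ p γ, R p γ = Real.logb 2
      (1 + p * σ ^ 2 / (2 * (1 + γ * σJ ^ 2) + (1 + γ * σJ ^ 2) ^ 2 / (p * σ ^ 2)))) :
    (R pth 0 < R P Γ ↔ pth * (σJ ^ 2 * Γ + 1) < P) ∧
    (R P Γ < R pth 0 ↔ P < pth * (σJ ^ 2 * Γ + 1)) := by
  have ha : (0:ℝ) < 1 + Γ * σJ ^ 2 := by positivity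
  set u : ℝ := P * σ ^ 2 / (1 + Γ * σJ ^ 2) with hu
  set v : ℝ := pth * σ ^ 2 with hv
  have hupos : 0 < u := by positivity
  have hvpos : 0 < v := by positivity
  have e1 : R P Γ = Real.logb 2 (1 + u ^ 2 / (2 * u + 1)) := by
    rw [hR, skg_rewrite σ P Γ σJ hσ hP hΓ.le hσJ]
  have e2 : R pth 0 = Real.logb 2 (1 + v ^ 2 / (2 * v + 1)) := by
    rw [hR, skg_rewrite σ pth 0 σJ hσ hpth le_rfl hσJ]
    norm_num [hv]
  have key : ∀ x y : ℝ, 0 < x → 0 < y →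
      (Real.logb 2 (1 + x ^ 2 / (2 * x + 1)) < Real.logb 2 (1 + y ^ 2 / (2 * y + 1)) ↔ x < y) := by
    intro x y hx hy
    rw [Real.logb_lt_logb_iff one_lt_two (by positivity) (by positivity),
      add_lt_add_iff_left, skg_f_lt_iff x y hx hy]
  have hvu : v < u ↔ pth * (σJ ^ 2 * Γ + 1) < P := by
    rw [hu, hv, lt_div_iff₀ ha]
    constructor
    · intro h; nlinarith [pow_pos hσ 2]
    · intro h; nlinarith [pow_pos hσ 2]
  have huv : u < v ↔ P < pth * (σJ ^ 2 * Γ + 1) := by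
    rw [hu, hv, div_lt_iff₀ ha]
    constructor
    · intro h; nlinarith [pow_pos hσ 2]
    · intro h; nlinarith [pow_pos hσ 2]
  rw [e1, e2, key v u hvpos hupos, key u v hupos hvpos]
  exact ⟨hvu, huv⟩
end

section
/- Fix σ > 0, σ_J > 0, Γ > 0, p_th > 0 and P > p_th, with P > p_th·(σ_J²·Γ + 1). Define R(p, γ) = log₂(1 + p·σ²/(2·(1 + γ·σ_J²) + (1 + γ·σ_J²)²/(p·σ²))) for p > 0, γ ≥ 0, and the leader payoff f(p) = R(p, 0) if 0 < p ≤ p_th and f(p) = R(p, Γ) if p_th < p ≤ P. Then f attains its maximum over (0, P] uniquely at p = P, i.e., f(p) < f(P) for all p ∈ (0, P] with p ≠ P. -/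
private lemma arg_eq (p c s : ℝ) (hp : 0 < p) (hc : 0 < c) (hs : 0 < s) :
    1 + p * s / (2 * c + c ^ 2 / (p * s)) =
    1 + (p * s / c) ^ 2 / (2 * (p * s / c) + 1) := by
  have hps : 0 < p * s := by positivity
  have hden : 0 < 2 * c + c ^ 2 / (p * s) := by positivity
  have hden2 : 0 < 2 * (p * s / c) + 1 := by positivity
  field_simp

private lemma hmono (a b : ℝ) (ha : 0 < a) (hab : a < b) :
    a ^ 2 / (2 * a + 1) < b ^ 2 / (2 * b + 1) := by
  have h1 : 0 < 2 * a + 1 := by linarith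
  have h2 : 0 < 2 * b + 1 := by linarith
  have hb0 : 0 < b := ha.trans hab
  rw [div_lt_div_iff₀ h1 h2]
  nlinarith [mul_pos (sub_pos.mpr hab) (by positivity : (0:ℝ) < 2*a*b + a + b)]

/-- The case `P > p_th(σ_J²Γ + 1)` of Theorem 1: against the best-responding reactive
jammer (silent below threshold, uniform jamming `Γ` above), the leader payoff
`f(p) = R(p,0)` for `p ≤ p_th` and `f(p) = R(p,Γ)` for `p > p_th` attains its maximum
over `(0, P]` uniquely at full power `p = P`. -/
theorem stackelberg_full_power_optimal
    (σ σJ Γ pth P : ℝ) (hσ : 0 < σ) (hσJ : 0 < σJ) (hΓ : 0 < Γ) (hpth : 0 < pth)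
    (hPpth : pth < P) (hcrit : pth * (σJ ^ 2 * Γ + 1) < P)
    (R : ℝ → ℝ → ℝ)
    (hR : ∀ p γ, R p γ = Real.logb 2
      (1 + p * σ ^ 2 / (2 * (1 + γ * σJ ^ 2) + (1 + γ * σJ ^ 2) ^ 2 / (p * σ ^ 2))))
    (f : ℝ → ℝ) (hf : ∀ p, f p = if p ≤ pth then R p 0 else R p Γ) :
    ∀ p ∈ Set.Ioc (0 : ℝ) P, p ≠ P → f p < f P := by
  intro p hp hne
  obtain ⟨hp0, hpP⟩ := hp
  have hs : (0:ℝ) < σ ^ 2 := by positivity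
  have hcΓ : (0:ℝ) < 1 + Γ * σJ ^ 2 := by positivity
  have hc0 : (0:ℝ) < 1 + 0 * σJ ^ 2 := by norm_num
  have hP0 : (0:ℝ) < P := lt_trans hpth hPpth
  have hfP : f P = R P Γ := by rw [hf]; simp [not_le.mpr hPpth]
  -- target argument
  set b := P * σ ^ 2 / (1 + Γ * σJ ^ 2) with hb
  have hbpos : 0 < b := by positivity
  have key : ∀ a : ℝ, 0 < a → a < b →
      Real.logb 2 (1 + a ^ 2 / (2 * a + 1)) < f P := by
    intro a ha hab
    rw [hfP, hR, arg_eq P (1 + Γ * σJ ^ 2) (σ ^ 2) hP0 hcΓ hs]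
    have h1 : (0:ℝ) < 1 + a ^ 2 / (2 * a + 1) := by positivity
    exact Real.logb_lt_logb (by norm_num) h1 (by linarith [hmono a b ha hab])
  rw [hf]
  by_cases hle : p ≤ pth
  · rw [if_pos hle, hR, arg_eq p (1 + 0 * σJ ^ 2) (σ ^ 2) hp0 hc0 hs]
    have hab : p * σ ^ 2 / (1 + 0 * σJ ^ 2) < b := by
      rw [hb, div_lt_div_iff₀ hc0 hcΓ]
      nlinarith [mul_lt_mul_of_pos_right hcrit hs, mul_le_mul_of_nonneg_right hle hs.le,
        mul_pos hs hΓ, mul_pos hp0 hs, sq_nonneg σJ]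
    exact key _ (by positivity) hab
  · rw [if_neg hle, hR, arg_eq p (1 + Γ * σJ ^ 2) (σ ^ 2) hp0 hcΓ hs]
    have hpP' : p < P := lt_of_le_of_ne hpP hne
    have hab : p * σ ^ 2 / (1 + Γ * σJ ^ 2) < b := by
      rw [hb, div_lt_div_iff₀ hcΓ hcΓ]
      nlinarith [mul_lt_mul_of_pos_right hpP' (mul_pos hs hcΓ)]
    exact key _ (by positivity) hab
end

section
/- Fix σ > 0, σ_J > 0, Γ > 0, p_th > 0 and P > p_th, with P < p_th·(σ_J²·Γ + 1). Define R(p, γ) = log₂(1 + p·σ²/(2·(1 + γ·σ_J²) + (1 + γ·σ_J²)²/(p·σ²))) for p > 0, γ ≥ 0, and the leader payoff f(p) = R(p, 0) if 0 < p ≤ p_th and f(p) = R(p, Γ) if p_th < p ≤ P. Then f attains its maximum over (0, P] uniquely at p = p_th, i.e., f(p) < f(p_th) for all p ∈ (0, P] with p ≠ p_th. -/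
/-- Key algebraic identity: the SNR expression rewrites in terms of `t = x / c`. -/
lemma snr_rewrite (c x : ℝ) (hc : 0 < c) (hx : 0 < x) :
    x / (2 * c + c ^ 2 / x) = (x / c) ^ 2 / (2 * (x / c) + 1) := by
  field_simp

/-- Strict monotonicity of `t ↦ logb 2 (1 + t²/(2t+1))` on positives. -/
lemma logb_snr_mono (a b : ℝ) (ha : 0 < a) (hab : a < b) :
    Real.logb 2 (1 + a ^ 2 / (2 * a + 1)) < Real.logb 2 (1 + b ^ 2 / (2 * b + 1)) := by
  have hb : 0 < b := ha.trans hab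
  apply Real.logb_lt_logb one_lt_two
  · positivity
  · have h : a ^ 2 / (2 * a + 1) < b ^ 2 / (2 * b + 1) := by
      rw [div_lt_div_iff₀ (by linarith) (by linarith)]
      nlinarith [mul_pos (mul_pos ha hb) (sub_pos.mpr hab), mul_pos (add_pos ha hb) (sub_pos.mpr hab)]
    linarith

/-- The case `P < p_th(σ_J²Γ + 1)` of Theorem 1: against the best-responding reactive
jammer (silent below threshold, uniform jamming `Γ` above), the leader payoff
`f(p) = R(p,0)` for `p ≤ p_th` and `f(p) = R(p,Γ)` for `p > p_th` attains its maximum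
over `(0, P]` uniquely at the threshold `p = p_th`. -/
theorem stackelberg_threshold_power_optimal
    (σ σJ Γ pth P : ℝ) (hσ : 0 < σ) (hσJ : 0 < σJ) (hΓ : 0 < Γ) (hpth : 0 < pth)
    (hPpth : pth < P) (hcrit : P < pth * (σJ ^ 2 * Γ + 1))
    (R : ℝ → ℝ → ℝ)
    (hR : ∀ p γ, R p γ = Real.logb 2
      (1 + p * σ ^ 2 / (2 * (1 + γ * σJ ^ 2) + (1 + γ * σJ ^ 2) ^ 2 / (p * σ ^ 2))))
    (f : ℝ → ℝ) (hf : ∀ p, f p = if p ≤ pth then R p 0 else R p Γ) :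
    ∀ p ∈ Set.Ioc (0 : ℝ) P, p ≠ pth → f p < f pth := by
  intro p hp hne
  obtain ⟨hp0, hpP⟩ := hp
  have hσ2 : (0:ℝ) < σ ^ 2 := by positivity
  have hkey : ∀ x : ℝ, 0 < x →
      1 + x / (2 * (1 + 0 * σJ ^ 2) + (1 + 0 * σJ ^ 2) ^ 2 / x)
        = 1 + x ^ 2 / (2 * x + 1) := by
    intro x hx
    field_simp
    ring
  have hfpth : f pth = Real.logb 2 (1 + (pth * σ ^ 2) ^ 2 / (2 * (pth * σ ^ 2) + 1)) := by
    rw [hf, if_pos le_rfl, hR, hkey _ (by positivity)]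
  rw [hfpth]
  by_cases hple : p ≤ pth
  · have hplt : p < pth := lt_of_le_of_ne hple hne
    rw [hf, if_pos hple, hR, hkey _ (by positivity)]
    exact logb_snr_mono _ _ (by positivity)
      (by apply mul_lt_mul_of_pos_right hplt hσ2)
  · -- p > pth : jammer active
    push_neg at hple
    rw [hf, if_neg (not_le.mpr hple), hR]
    have hc : (0:ℝ) < 1 + Γ * σJ ^ 2 := by positivity
    rw [snr_rewrite (1 + Γ * σJ ^ 2) (p * σ ^ 2) hc (by positivity)]
    apply logb_snr_mono
    · positivity
    · rw [div_lt_iff₀ hc]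
      have : σJ ^ 2 * Γ + 1 = 1 + Γ * σJ ^ 2 := by ring
      nlinarith [mul_lt_mul_of_pos_right (hpP.trans_lt hcrit) hσ2]
end

section
/- Fix σ > 0, σ_J > 0, Γ > 0 and p > 0, and define R(p, γ) = log₂(1 + p·σ²/(2·(1 + γ·σ_J²) + (1 + γ·σ_J²)²/(p·σ²))) for γ ≥ 0. Then R(p, Γ) < R(p, 0). Consequently, a jammer who can choose her sensing threshold p_th strategically minimizes the legitimate parties' per-subcarrier secret-key rate by choosing any threshold p_th = ε with 0 ≤ ε < p (so that the transmission is always detected) together with uniform jamming power Γ, achieving the value R(p, Γ), which is strictly smaller than the un-jammed value R(p, 0) obtained with any threshold p_th ≥ p. -/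
/-- Lemma 3 of the paper: `R(p, Γ) < R(p, 0)`, so a jammer choosing her sensing
threshold strategically minimizes the legitimate per-subcarrier rate by picking any
threshold `ε` with `0 ≤ ε < p` (the transmission is then detected and jammed with
power `Γ`), achieving the least value `R(p, Γ)` among all thresholds `p_th ≥ 0`,
where a threshold `p_th ≥ p` would leave the un-jammed value `R(p, 0)`. -/
theorem strategic_threshold_best_response
    (σ σJ Γ p : ℝ) (hσ : 0 < σ) (hσJ : 0 < σJ) (hΓ : 0 < Γ) (hp : 0 < p)
    (R : ℝ → ℝ → ℝ)
    (hR : ∀ q γ, R q γ = Real.logb 2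
      (1 + q * σ ^ 2 / (2 * (1 + γ * σJ ^ 2) + (1 + γ * σJ ^ 2) ^ 2 / (q * σ ^ 2)))) :
    R p Γ < R p 0 ∧
    IsLeast {x : ℝ | ∃ pth : ℝ, 0 ≤ pth ∧
        x = (if pth < p then R p Γ else R p 0)} (R p Γ) ∧
    (∀ ε : ℝ, 0 ≤ ε → ε < p → (if ε < p then R p Γ else R p 0) = R p Γ) := by
  have hA : 0 < p * σ ^ 2 := by positivity
  have hu : (1 : ℝ) < 1 + Γ * σJ ^ 2 := lt_add_of_pos_right 1 (by positivity)
  set A := p * σ ^ 2 with hAdef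
  set u := 1 + Γ * σJ ^ 2 with hudef
  have hu0 : 0 < u := by linarith
  have hd0 : 0 < 2 * (1 : ℝ) + 1 ^ 2 / A := by positivity
  have hd1 : 0 < 2 * u + u ^ 2 / A := by positivity
  have hdlt : 2 * (1 : ℝ) + 1 ^ 2 / A < 2 * u + u ^ 2 / A := by
    have h1 : (1 : ℝ) ^ 2 / A < u ^ 2 / A := by
      exact (div_lt_div_iff_of_pos_right hA).mpr (by nlinarith)
    linarith
  have key : R p Γ < R p 0 := by
    rw [hR, hR]
    simp only [zero_mul]
    apply Real.logb_lt_logb one_lt_two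
    · have : 0 < A / (2 * u + u ^ 2 / A) := by positivity
      simp only [← hAdef, ← hudef]; linarith
    · simp only [← hAdef, ← hudef]
      have := div_lt_div_of_pos_left hA hd0 hdlt
      linarith
  refine ⟨key, ⟨⟨0, le_refl 0, by simp [hp]⟩, ?_⟩, fun ε _ hε => if_pos hε⟩
  rintro x ⟨pth, _, rfl⟩
  split_ifs
  · exact le_refl _
  · exact le_of_lt key
end

section
/- Fix σ > 0, σ_J > 0, Γ > 0 and P > 0, and define R(p, γ) = log₂(1 + p·σ²/(2·(1 + γ·σ_J²) + (1 + γ·σ_J²)²/(p·σ²))) for p > 0, γ ≥ 0. Then the function p ↦ R(p, Γ) attains its maximum over (0, P] uniquely at p = P, i.e., R(p, Γ) < R(P, Γ) for all p ∈ (0, P) ; hence when the reactive jammer chooses her sensing threshold strategically (always below the legitimate power, with uniform jamming at power Γ), the legitimate parties' Stackelberg-optimal pilot power is full power P and the equilibrium per-subcarrier secret-key rate is R(P, Γ). -/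
/-- Theorem 2 of the paper: against a strategic reactive jammer (threshold always set
below the legitimate power, uniform jamming with power `Γ`), the leader's payoff
`p ↦ R(p, Γ)` attains its maximum over `(0, P]` uniquely at full power `p = P`, so
the Stackelberg-optimal pilot power is `P` and the equilibrium rate is `R(P, Γ)`. -/
theorem stackelberg_strategic_threshold_full_power
    (σ σJ Γ P : ℝ) (hσ : 0 < σ) (hσJ : 0 < σJ) (hΓ : 0 < Γ) (hP : 0 < P)
    (R : ℝ → ℝ → ℝ)
    (hR : ∀ p γ, R p γ = Real.logb 2
      (1 + p * σ ^ 2 / (2 * (1 + γ * σJ ^ 2) + (1 + γ * σJ ^ 2) ^ 2 / (p * σ ^ 2)))) :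
    ∀ p ∈ Set.Ioo (0 : ℝ) P, R p Γ < R P Γ := by
  intro p hp
  obtain ⟨hp0, hpP⟩ := hp
  rw [hR, hR]
  set b := 1 + Γ * σJ ^ 2 with hb
  have hb0 : 0 < b := by positivity
  have hx : 0 < p * σ ^ 2 := by positivity
  have hy : 0 < P * σ ^ 2 := by positivity
  have hxy : p * σ ^ 2 < P * σ ^ 2 :=
    mul_lt_mul_of_pos_right hpP (by positivity)
  have e : ∀ z : ℝ, 0 < z → z / (2 * b + b ^ 2 / z) = z ^ 2 / (2 * b * z + b ^ 2) := by
    intro z hz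
    rw [div_eq_div_iff (by positivity) (by positivity)]
    field_simp
  have key : p * σ ^ 2 / (2 * b + b ^ 2 / (p * σ ^ 2))
      < P * σ ^ 2 / (2 * b + b ^ 2 / (P * σ ^ 2)) := by
    rw [e _ hx, e _ hy, div_lt_div_iff₀ (by positivity) (by positivity)]
    nlinarith [mul_pos (mul_pos hb0 (sub_pos.mpr hxy)) (mul_pos hx hy),
      mul_pos (mul_pos (mul_pos hb0 hb0) (sub_pos.mpr hxy)) (add_pos hx hy)]
  apply Real.logb_lt_logb one_lt_two
  · positivity
  · linarith
end
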